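/- The function $f(a,b) := 4 + \frac{1}{2}\big(ab - 2a - 2b - \sqrt{ab(4-a)(4-b)}\big)$ is convex on the convex set $\{(a,b) \in \mathbb{R}_{\geq 0}^2 \mid a + b \leq 4\}$. -/
import Mathlib


noncomputable def f (a b : ℝ) : ℝ :=
  4 + 1 / 2 * (a * b - 2 * a - 2 * b - Real.sqrt (a * b * (4 - a) * (4 - b)))

/-- Lower bound: for every `c, d > 0` with `c * d = 1`, the convex function
`(c(a-2)+d(b-2))^2/4 + 2 - c^2 - d^2` minorizes `f` on the square. -/
lemma f_lb (c d a b : ℝ) (hc : 0 < c) (hcd : c * d = 1)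
    (ha : 0 ≤ a) (ha4 : a ≤ 4) (hb : 0 ≤ b) (hb4 : b ≤ 4) :
    (c * (a - 2) + d * (b - 2)) ^ 2 / 4 + 2 - c ^ 2 - d ^ 2 ≤ f a b := by
  have hd : 0 < d := by nlinarith
  set A := a * (4 - a) with hA
  set B := b * (4 - b) with hB
  have hA0 : 0 ≤ A := mul_nonneg ha (by linarith)
  have hB0 : 0 ≤ B := mul_nonneg hb (by linarith)
  have hM0 : 0 ≤ (c ^ 2 * A + d ^ 2 * B) / 2 := by positivity
  have hsq : Real.sqrt (a * b * (4 - a) * (4 - b)) ≤ (c ^ 2 * A + d ^ 2 * B) / 2 := by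
    rw [show a * b * (4 - a) * (4 - b) = A * B by rw [hA, hB]; ring]
    rw [show (c ^ 2 * A + d ^ 2 * B) / 2 = Real.sqrt (((c ^ 2 * A + d ^ 2 * B) / 2) ^ 2) by
      rw [Real.sqrt_sq hM0]]
    apply Real.sqrt_le_sqrt
    have hcd2 : c ^ 2 * d ^ 2 = 1 := by nlinarith [hcd]
    nlinarith [sq_nonneg (c ^ 2 * A - d ^ 2 * B), hcd2, mul_nonneg hA0 hB0]
  have key : (c * (a - 2) + d * (b - 2)) ^ 2 / 4 + 2 - c ^ 2 - d ^ 2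
      = 4 + 1 / 2 * (a * b - 2 * a - 2 * b - (c ^ 2 * A + d ^ 2 * B) / 2) := by
    rw [hA, hB]; linear_combination ((a - 2) * (b - 2) / 2) * hcd
  unfold f
  rw [key]
  linarith

/-- At interior points there exist `c, d` attaining equality. -/
lemma f_eq (a b : ℝ) (ha : 0 < a) (ha4 : a < 4) (hb : 0 < b) (hb4 : b < 4) :
    ∃ c d : ℝ, 0 < c ∧ c * d = 1 ∧
      f a b = (c * (a - 2) + d * (b - 2)) ^ 2 / 4 + 2 - c ^ 2 - d ^ 2 := by
  set A := a * (4 - a) with hA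
  set B := b * (4 - b) with hB
  have hA0 : 0 < A := mul_pos ha (by linarith)
  have hB0 : 0 < B := mul_pos hb (by linarith)
  have hsA : 0 < Real.sqrt A := Real.sqrt_pos.mpr hA0
  have hsB : 0 < Real.sqrt B := Real.sqrt_pos.mpr hB0
  set c := Real.sqrt (Real.sqrt B / Real.sqrt A) with hcdef
  have hc : 0 < c := Real.sqrt_pos.mpr (by positivity)
  refine ⟨c, c⁻¹, hc, mul_inv_cancel₀ hc.ne', ?_⟩
  have hc2 : c ^ 2 = Real.sqrt B / Real.sqrt A := by
    rw [hcdef, Real.sq_sqrt (by positivity)]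
  have hd2 : (c⁻¹) ^ 2 = Real.sqrt A / Real.sqrt B := by
    rw [inv_pow, hc2, inv_div]
  have hmean : (c ^ 2 * A + (c⁻¹) ^ 2 * B) / 2 = Real.sqrt A * Real.sqrt B := by
    rw [hc2, hd2]
    have e1 : Real.sqrt B / Real.sqrt A * A = Real.sqrt A * Real.sqrt B := by
      rw [div_mul_eq_mul_div, mul_div_assoc, Real.div_sqrt]; ring
    have e2 : Real.sqrt A / Real.sqrt B * B = Real.sqrt A * Real.sqrt B := by
      rw [div_mul_eq_mul_div, mul_div_assoc, Real.div_sqrt]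
    rw [e1, e2]; ring
  have hsqrtS : Real.sqrt (a * b * (4 - a) * (4 - b)) = Real.sqrt A * Real.sqrt B := by
    rw [show a * b * (4 - a) * (4 - b) = A * B by rw [hA, hB]; ring,
      Real.sqrt_mul hA0.le]
  have key : (c * (a - 2) + c⁻¹ * (b - 2)) ^ 2 / 4 + 2 - c ^ 2 - (c⁻¹) ^ 2
      = 4 + 1 / 2 * (a * b - 2 * a - 2 * b - (c ^ 2 * A + (c⁻¹) ^ 2 * B) / 2) := by
    rw [hA, hB]
    linear_combination ((a - 2) * (b - 2) / 2) * (mul_inv_cancel₀ hc.ne')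
  unfold f
  rw [key, hmean, hsqrtS]

lemma f_zero_left (t : ℝ) : f 0 t = 4 - t := by
  simp [f]; ring

lemma f_zero_right (t : ℝ) : f t 0 = 4 - t := by
  simp [f]; ring

set_option maxHeartbeats 1000000 in
theorem stmt_10 :
    ConvexOn ℝ {p : ℝ × ℝ | 0 ≤ p.1 ∧ 0 ≤ p.2 ∧ p.1 + p.2 ≤ 4}
      (fun p => f p.1 p.2) := by
  constructor
  · intro x hx y hy q r hq hr hqr
    obtain ⟨hx1, hx2, hx3⟩ := hx
    obtain ⟨hy1, hy2, hy3⟩ := hy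
    refine ⟨?_, ?_, ?_⟩ <;>
      simp only [Prod.fst_add, Prod.snd_add, Prod.smul_fst, Prod.smul_snd, smul_eq_mul] <;>
      nlinarith [mul_nonneg hq hx1, mul_nonneg hr hy1, mul_nonneg hq hx2, mul_nonneg hr hy2,
        mul_le_mul_of_nonneg_left hx3 hq, mul_le_mul_of_nonneg_left hy3 hr]
  · intro x hx y hy q r hq hr hqr
    obtain ⟨hx1, hx2, hx3⟩ := hx
    obtain ⟨hy1, hy2, hy3⟩ := hy
    rcases eq_or_lt_of_le hq with hq0 | hq0
    · have hr1 : r = 1 := by linarith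
      simp [← hq0, hr1]
    rcases eq_or_lt_of_le hr with hr0 | hr0
    · have hq1 : q = 1 := by linarith
      simp [← hr0, hq1]
    simp only [Prod.fst_add, Prod.snd_add, Prod.smul_fst, Prod.smul_snd, smul_eq_mul]
    set z1 := q * x.1 + r * y.1 with hz1
    set z2 := q * x.2 + r * y.2 with hz2
    have hz1nn : 0 ≤ z1 := by positivity
    have hz2nn : 0 ≤ z2 := by positivity
    have hzsum : z1 + z2 ≤ 4 := by
      rw [hz1, hz2]
      nlinarith [mul_le_mul_of_nonneg_left hx3 hq, mul_le_mul_of_nonneg_left hy3 hr]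
    rcases eq_or_lt_of_le hz1nn with hz10 | hz10
    · -- z1 = 0 forces x.1 = y.1 = 0
      have hx10 : x.1 = 0 := by nlinarith [mul_nonneg hq hx1, mul_nonneg hr hy1]
      have hy10 : y.1 = 0 := by nlinarith [mul_nonneg hq hx1, mul_nonneg hr hy1]
      rw [← hz10, hx10, hy10, f_zero_left, f_zero_left, f_zero_left]
      rw [hz2]; nlinarith
    rcases eq_or_lt_of_le hz2nn with hz20 | hz20
    · have hx20 : x.2 = 0 := by nlinarith [mul_nonneg hq hx2, mul_nonneg hr hy2]
      have hy20 : y.2 = 0 := by nlinarith [mul_nonneg hq hx2, mul_nonneg hr hy2]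
      rw [← hz20, hx20, hy20, f_zero_right, f_zero_right, f_zero_right]
      rw [hz1]; nlinarith
    have hz14 : z1 < 4 := by linarith
    have hz24 : z2 < 4 := by linarith
    obtain ⟨c, d, hc, hcd, heq⟩ := f_eq z1 z2 hz10 hz14 hz20 hz24
    have hx14 : x.1 ≤ 4 := by linarith
    have hx24 : x.2 ≤ 4 := by linarith
    have hy14 : y.1 ≤ 4 := by linarith
    have hy24 : y.2 ≤ 4 := by linarith
    have hbx := f_lb c d x.1 x.2 hc hcd hx1 hx14 hx2 hx24
    have hby := f_lb c d y.1 y.2 hc hcd hy1 hy14 hy2 hy24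
    have hmid : (c * (z1 - 2) + d * (z2 - 2)) ^ 2 / 4 + 2 - c ^ 2 - d ^ 2
        ≤ q * ((c * (x.1 - 2) + d * (x.2 - 2)) ^ 2 / 4 + 2 - c ^ 2 - d ^ 2)
          + r * ((c * (y.1 - 2) + d * (y.2 - 2)) ^ 2 / 4 + 2 - c ^ 2 - d ^ 2) := by
      have hlin : c * (z1 - 2) + d * (z2 - 2)
          = q * (c * (x.1 - 2) + d * (x.2 - 2)) + r * (c * (y.1 - 2) + d * (y.2 - 2)) := by
        rw [hz1, hz2]; linear_combination (2 * c + 2 * d) * hqr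
      rw [hlin]
      set P := c * (x.1 - 2) + d * (x.2 - 2) with hP
      set Q := c * (y.1 - 2) + d * (y.2 - 2) with hQ
      clear_value P Q
      clear hbx hby heq hlin
      have hr' : r = 1 - q := by linarith
      subst hr'
      nlinarith [mul_nonneg (mul_nonneg hq0.le (by linarith : (0:ℝ) ≤ 1 - q)) (sq_nonneg (P - Q))]
    calc f z1 z2 = (c * (z1 - 2) + d * (z2 - 2)) ^ 2 / 4 + 2 - c ^ 2 - d ^ 2 := heq
      _ ≤ q * ((c * (x.1 - 2) + d * (x.2 - 2)) ^ 2 / 4 + 2 - c ^ 2 - d ^ 2)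
          + r * ((c * (y.1 - 2) + d * (y.2 - 2)) ^ 2 / 4 + 2 - c ^ 2 - d ^ 2) := hmid
      _ ≤ q * f x.1 x.2 + r * f y.1 y.2 := by
          have := mul_le_mul_of_nonneg_left hbx hq
          have := mul_le_mul_of_nonneg_left hby hr
          linarith
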